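/- Let n ≥ 2 and let A₁, …, Aₙ be distinct points of the Euclidean plane satisfying dist(A₁, Aₙ) = ∑_{i=1}^{n−1} dist(A_i, A_{i+1}) (so that the points lie in order on a line). Let B₁, …, Bₙ be any points of the plane with dist(B_i, B_{i+1}) = dist(A_i, A_{i+1}) for 1 ≤ i ≤ n − 1 and dist(B₁, Bₙ) = dist(A₁, Aₙ). Then the two configurations are congruent: there is an isometric equivalence φ : ℝ² ≃ᵢ ℝ² with φ(A_i) = B_i for all i. (Thus n distance measurements determine this degenerate n-point configuration up to isometry.) -/

import Mathlib

noncomputable section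

open Finset

/-- The Euclidean plane. -/
abbrev Plane : Type := EuclideanSpace ℝ (Fin 2)

/-- Uniqueness of a point weakly between two distinct points at a given distance. -/
lemma wbtw_unique_aux {x z y y' : Plane} (hxz : x ≠ z) (h : Wbtw ℝ x y z)
    (h' : Wbtw ℝ x y' z) (hd : dist x y = dist x y') : y = y' := by
  obtain ⟨t, ht, rfl⟩ := h
  obtain ⟨s, hs, rfl⟩ := h'
  have hdz : dist x z ≠ 0 := dist_ne_zero.2 hxz
  have h1 : dist x (AffineMap.lineMap x z t) = t * dist x z := by
    rw [dist_left_lineMap, Real.norm_eq_abs, abs_of_nonneg ht.1]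
  have h2 : dist x (AffineMap.lineMap x z s) = s * dist x z := by
    rw [dist_left_lineMap, Real.norm_eq_abs, abs_of_nonneg hs.1]
  have : t = s := by
    have := hd
    rw [h1, h2] at this
    exact mul_right_cancel₀ hdz this
  rw [this]

/-- If the distinct points `A 1, …, A n` satisfy
`|A₁Aₙ| = |A₁A₂| + |A₂A₃| + ⋯ + |Aₙ₋₁Aₙ|` (so they lie in order on a line), then any
points `B 1, …, B n` with the same `n` measured distances `|BᵢBᵢ₊₁|` (`1 ≤ i ≤ n-1`)
and `|B₁Bₙ|` form a congruent configuration. -/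
theorem collinear_points_distance_rigid (n : ℕ) (hn : 2 ≤ n) (A : ℕ → Plane)
    (hdistinct : ∀ i ∈ Finset.Icc 1 n, ∀ j ∈ Finset.Icc 1 n, i ≠ j → A i ≠ A j)
    (hline : dist (A 1) (A n) = ∑ i ∈ Finset.Ico 1 n, dist (A i) (A (i + 1)))
    (B : ℕ → Plane)
    (hB : ∀ i ∈ Finset.Ico 1 n, dist (B i) (B (i + 1)) = dist (A i) (A (i + 1)))
    (hBn : dist (B 1) (B n) = dist (A 1) (A n)) :
    ∃ φ : Plane ≃ᵢ Plane, ∀ i ∈ Finset.Icc 1 n, φ (A i) = B i := by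
  have h1n : (1:ℕ) ≤ n := by omega
  have hA1n : A 1 ≠ A n :=
    hdistinct 1 (Finset.mem_Icc.2 ⟨le_refl 1, h1n⟩) n (Finset.mem_Icc.2 ⟨h1n, le_refl n⟩)
      (by omega)
  have hdpos : (0:ℝ) < dist (A 1) (A n) := dist_pos.2 hA1n
  -- Key structural fact, applied to both A and B.
  have key : ∀ (P : ℕ → Plane),
      (∀ j ∈ Finset.Ico 1 n, dist (P j) (P (j+1)) = dist (A j) (A (j+1))) →
      dist (P 1) (P n) = dist (A 1) (A n) →
      ∀ i ∈ Finset.Icc 1 n,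
        dist (P 1) (P i) = ∑ j ∈ Finset.Ico 1 i, dist (A j) (A (j+1)) ∧
        dist (P 1) (P i) + dist (P i) (P n) = dist (P 1) (P n) := by
    intro P hP hPn i hi
    rw [Finset.mem_Icc] at hi
    have h1 : dist (P 1) (P i) ≤ ∑ j ∈ Finset.Ico 1 i, dist (P j) (P (j+1)) :=
      dist_le_Ico_sum_dist P hi.1
    have h2 : dist (P i) (P n) ≤ ∑ j ∈ Finset.Ico i n, dist (P j) (P (j+1)) :=
      dist_le_Ico_sum_dist P hi.2
    have hsplit : ∑ j ∈ Finset.Ico 1 i, dist (P j) (P (j+1))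
        + ∑ j ∈ Finset.Ico i n, dist (P j) (P (j+1))
        = ∑ j ∈ Finset.Ico 1 n, dist (P j) (P (j+1)) :=
      Finset.sum_Ico_consecutive _ hi.1 hi.2
    have hPsum : ∑ j ∈ Finset.Ico 1 n, dist (P j) (P (j+1)) = dist (P 1) (P n) := by
      rw [hPn, hline]
      exact Finset.sum_congr rfl hP
    have htri : dist (P 1) (P n) ≤ dist (P 1) (P i) + dist (P i) (P n) :=
      dist_triangle _ _ _
    have e1 : dist (P 1) (P i) = ∑ j ∈ Finset.Ico 1 i, dist (P j) (P (j+1)) := by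
      linarith
    constructor
    · rw [e1]
      refine Finset.sum_congr rfl fun j hj => hP j ?_
      exact Finset.Ico_subset_Ico_right hi.2 hj
    · linarith
  -- Construct the isometry.
  have hnorm : ‖A n - A 1‖ = ‖B n - B 1‖ := by
    rw [← dist_eq_norm, ← dist_eq_norm, dist_comm (A n), dist_comm (B n), hBn]
  set L := Submodule.reflection (ℝ ∙ ((A n - A 1) - (B n - B 1)))ᗮ with hLdef
  have hL : L (A n - A 1) = B n - B 1 := Submodule.reflection_sub hnorm
  set φ : Plane ≃ᵢ Plane :=
    (((IsometryEquiv.constVAdd (-(A 1)) : Plane ≃ᵢ Plane)).trans L.toIsometryEquiv).trans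
      ((IsometryEquiv.constVAdd (B 1) : Plane ≃ᵢ Plane)) with hφdef
  have hφ : ∀ x, φ x = B 1 + L (-(A 1) + x) := fun x => rfl
  have hφ1 : φ (A 1) = B 1 := by
    rw [hφ, neg_add_cancel, map_zero, add_zero]
  have hφn : φ (A n) = B n := by
    rw [hφ]
    have : -(A 1) + A n = A n - A 1 := by abel
    rw [this, hL]
    abel
  refine ⟨φ, fun i hi => ?_⟩
  have hAi := key A (fun j _ => rfl) rfl i hi
  have hBi := key B hB hBn i hi
  have hB1n : B 1 ≠ B n := by
    rw [← dist_pos, hBn]; exact hdpos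
  -- φ (A i) has the right distance data
  have hd1 : dist (B 1) (φ (A i)) = dist (B 1) (B i) := by
    have h' : dist (B 1) (φ (A i)) = dist (A 1) (A i) := by
      rw [← hφ1, φ.dist_eq]
    rw [h', hAi.1, ← hBi.1]
  have hw1 : Wbtw ℝ (B 1) (φ (A i)) (B n) := by
    rw [← dist_add_dist_eq_iff, ← hφ1, ← hφn, φ.dist_eq, φ.dist_eq, φ.dist_eq]
    exact hAi.2
  have hw2 : Wbtw ℝ (B 1) (B i) (B n) := by
    rw [← dist_add_dist_eq_iff]
    exact hBi.2
  exact wbtw_unique_aux hB1n hw1 hw2 hd1
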